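/- The minimal spectral weight of a SUM-covering of the matrix D₂ = [[1,1],[1,0]] equals 1+√2, attained by covering with one 1×2 (or 2×1) rectangle and one 1×1 rectangle. -/

import Mathlib

/-- A rank-1 0/1 matrix (rectangle). -/
def IsRectangle {m n : ℕ} (R : Matrix (Fin m) (Fin n) ℤ) : Prop :=
  ∃ u v, (∀ x, u x = 0 ∨ u x = 1) ∧ (∀ y, v y = 0 ∨ v y = 1) ∧
    R = Matrix.vecMulVec u v

/-- Spectral weight √(ab) of a rectangle, where a (resp. b) is the number of
nonzero rows (resp. columns). -/
noncomputable def specWeight {m n : ℕ} (R : Matrix (Fin m) (Fin n) ℤ) : ℝ :=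
  Real.sqrt (((@Finset.filter _ (fun i => ∃ j, R i j ≠ 0) (fun _ => inferInstance) Finset.univ).card : ℝ) *
    ((@Finset.filter _ (fun j => ∃ i, R i j ≠ 0) (fun _ => inferInstance) Finset.univ).card : ℝ))

lemma sw_explicit (M : Matrix (Fin 2) (Fin 2) ℤ) (a b : ℕ)
    (ha : (@Finset.filter _ (fun i => ∃ j, M i j ≠ 0) (fun _ => inferInstance) Finset.univ).card = a)
    (hb : (@Finset.filter _ (fun j => ∃ i, M i j ≠ 0) (fun _ => inferInstance) Finset.univ).card = b) :
    specWeight M = Real.sqrt ((a : ℝ) * (b : ℝ)) := by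
  rw [specWeight, ha, hb]

lemma rect_bound (R : Matrix (Fin 2) (Fin 2) ℤ) (h : IsRectangle R) (h11 : R 1 1 = 0) :
    (Real.sqrt 2 - 1) * (R 0 0 : ℝ) + (R 0 1 : ℝ) + (R 1 0 : ℝ) ≤ specWeight R := by
  have s2 : (1:ℝ) ≤ Real.sqrt 2 := by
    rw [show (1:ℝ) = Real.sqrt 1 by simp]
    exact Real.sqrt_le_sqrt (by norm_num)
  have s2' : Real.sqrt 2 ≤ 2 := by
    nlinarith [Real.sq_sqrt (by norm_num : (0:ℝ) ≤ 2), Real.sqrt_nonneg 2]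
  obtain ⟨u, v, hu, hv, rfl⟩ := h
  have hu' : u = ![u 0, u 1] := by funext i; fin_cases i <;> rfl
  have hv' : v = ![v 0, v 1] := by funext i; fin_cases i <;> rfl
  rw [Matrix.vecMulVec_apply] at h11
  rcases hu 0 with h1|h1 <;> rcases hu 1 with h2|h2 <;> rcases hv 0 with h3|h3 <;>
      rcases hv 1 with h4|h4 <;>
    rw [h1, h2] at hu' <;> rw [h3, h4] at hv' <;> rw [h2, h4] at h11 <;>
    subst hu' <;> subst hv'
  -- u = ![0,0], v = ![0,0]
  · simp only [Matrix.vecMulVec_apply]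
    norm_num
    exact Real.sqrt_nonneg _
  -- u = ![0,0], v = ![0,1]
  · simp only [Matrix.vecMulVec_apply]
    norm_num
    exact Real.sqrt_nonneg _
  -- u = ![0,0], v = ![1,0]
  · simp only [Matrix.vecMulVec_apply]
    norm_num
    exact Real.sqrt_nonneg _
  -- u = ![0,0], v = ![1,1]
  · simp only [Matrix.vecMulVec_apply]
    norm_num
    exact Real.sqrt_nonneg _
  -- u = ![0,1], v = ![0,0]
  · simp only [Matrix.vecMulVec_apply]
    norm_num
    exact Real.sqrt_nonneg _
  -- u = ![0,1], v = ![0,1] : contradiction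
  · norm_num at h11
  -- u = ![0,1], v = ![1,0]
  · rw [sw_explicit _ 1 1 (by decide) (by decide)]
    simp only [Matrix.vecMulVec_apply]
    norm_num
  -- u = ![0,1], v = ![1,1] : contradiction
  · norm_num at h11
  -- u = ![1,0], v = ![0,0]
  · simp only [Matrix.vecMulVec_apply]
    norm_num
    exact Real.sqrt_nonneg _
  -- u = ![1,0], v = ![0,1]
  · rw [sw_explicit _ 1 1 (by decide) (by decide)]
    simp only [Matrix.vecMulVec_apply]
    norm_num
  -- u = ![1,0], v = ![1,0]
  · rw [sw_explicit _ 1 1 (by decide) (by decide)]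
    simp only [Matrix.vecMulVec_apply]
    norm_num
  -- u = ![1,0], v = ![1,1]
  · rw [sw_explicit _ 1 2 (by decide) (by decide)]
    simp only [Matrix.vecMulVec_apply]
    norm_num
  -- u = ![1,1], v = ![0,0]
  · simp only [Matrix.vecMulVec_apply]
    norm_num
    exact Real.sqrt_nonneg _
  -- u = ![1,1], v = ![0,1] : contradiction
  · norm_num at h11
  -- u = ![1,1], v = ![1,0]
  · rw [sw_explicit _ 2 1 (by decide) (by decide)]
    simp only [Matrix.vecMulVec_apply]
    norm_num
  -- u = ![1,1], v = ![1,1] : contradiction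
  · norm_num at h11

lemma rect_nonneg (R : Matrix (Fin 2) (Fin 2) ℤ) (h : IsRectangle R) (i j : Fin 2) :
    0 ≤ R i j := by
  obtain ⟨u, v, hu, hv, rfl⟩ := h
  rw [Matrix.vecMulVec_apply]
  rcases hu i with h1|h1 <;> rcases hv j with h2|h2 <;> rw [h1, h2] <;> norm_num

lemma list_sum_apply_fin2 (L : List (Matrix (Fin 2) (Fin 2) ℤ)) (i j : Fin 2) :
    L.sum i j = (L.map fun R => R i j).sum := by
  induction L with
  | nil => rfl
  | cons a t ih => simp [List.sum_cons, Matrix.add_apply, ih]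

lemma all_zero_of_sum_zero (l : List ℤ) (h : ∀ x ∈ l, 0 ≤ x) (hs : l.sum = 0) :
    ∀ x ∈ l, x = 0 := by
  induction l with
  | nil => simp
  | cons a t ih =>
    have ha : 0 ≤ a := h a (by simp)
    have ht : 0 ≤ t.sum := List.sum_nonneg (fun x hx => h x (by simp [hx]))
    rw [List.sum_cons] at hs
    have ha0 : a = 0 := by linarith
    intro x hx
    rcases List.mem_cons.mp hx with rfl | hx
    · exact ha0
    · exact ih (fun y hy => h y (by simp [hy])) (by linarith) x hx

lemma lower_bound (L : List (Matrix (Fin 2) (Fin 2) ℤ))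
    (hrect : ∀ R ∈ L, IsRectangle R) (h11 : ∀ R ∈ L, R 1 1 = 0) :
    (Real.sqrt 2 - 1) * ((L.sum 0 0 : ℤ) : ℝ) + ((L.sum 0 1 : ℤ) : ℝ) +
      ((L.sum 1 0 : ℤ) : ℝ) ≤ (L.map specWeight).sum := by
  induction L with
  | nil => simp [Matrix.zero_apply]
  | cons a t ih =>
    have hb := rect_bound a (hrect a (by simp)) (h11 a (by simp))
    have ih' := ih (fun R hR => hrect R (by simp [hR])) (fun R hR => h11 R (by simp [hR]))
    simp only [List.sum_cons, List.map_cons, Matrix.add_apply]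
    push_cast
    linarith

/-- The minimal spectral weight of a SUM-covering of D₂ = [[1,1],[1,0]]
equals 1+√2, and is attained. -/
theorem stmt_6 :
    IsLeast {s : ℝ | ∃ L : List (Matrix (Fin 2) (Fin 2) ℤ),
        (∀ R ∈ L, IsRectangle R) ∧ L.sum = !![1, 1; 1, 0] ∧
          s = (L.map specWeight).sum}
      (1 + Real.sqrt 2) := by
  constructor
  · -- membership
    refine ⟨[!![1,1;0,0], !![0,0;1,0]], ?_, ?_, ?_⟩
    · intro R hR
      rcases List.mem_pair.mp hR with rfl | rfl
      · exact ⟨![1,0], ![1,1], by decide, by decide, by decide⟩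
      · exact ⟨![0,1], ![1,0], by decide, by decide, by decide⟩
    · decide
    · simp only [List.map_cons, List.map_nil, List.sum_cons, List.sum_nil, add_zero]
      rw [sw_explicit _ 1 2 (by decide) (by decide),
        sw_explicit _ 1 1 (by decide) (by decide)]
      norm_num
      rw [add_comm]
  · -- lower bound
    rintro s ⟨L, hrect, hsum, rfl⟩
    have h0 : ∀ x ∈ L.map (fun R => R 1 1), x = 0 := by
      apply all_zero_of_sum_zero
      · intro x hx
        simp only [List.mem_map] at hx
        obtain ⟨R, hR, rfl⟩ := hx
        exact rect_nonneg R (hrect R hR) 1 1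
      · rw [← list_sum_apply_fin2, hsum]
        norm_num
    have h11 : ∀ R ∈ L, R 1 1 = 0 := fun R hR =>
      h0 _ (List.mem_map.mpr ⟨R, hR, rfl⟩)
    have key := lower_bound L hrect h11
    rw [hsum] at key
    norm_num at key
    linarith
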